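/- arXiv:1209.5628 — 2 statements merged into one kernel-verified Lean document; each statement's English description precedes it below -/
import Mathlib

section
/- The logarithmic derivative of the first Jacobi theta function equals J_1: (1/2πi)·(∂θ_1/∂z)(z,τ) / θ_1(z,τ) = J_1(z,τ). -/
open Complex

noncomputable section

/-- `q = e^{2πiτ}` -/
def qq (τ : ℂ) : ℂ := Complex.exp (2 * (Real.pi : ℂ) * I * τ)

/-- `p = e^{2πiz}` -/
def pp (z : ℂ) : ℂ := Complex.exp (2 * (Real.pi : ℂ) * I * z)

/-- Deformed (twisted) Eisenstein series `J_n(z,τ)`. -/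
def Jdef (n : ℕ) (z τ : ℂ) : ℂ :=
  (if n = 1 then pp z / (pp z - 1) else 0) + (bernoulli n : ℂ)
    - n * ∑' (k : ℕ+) (r : ℕ+),
        (r : ℂ) ^ (n - 1) * ((pp z) ^ (k : ℕ) + (-1 : ℂ) ^ n * (pp z) ^ (-(k : ℤ)))
          * (qq τ) ^ ((k : ℕ) * (r : ℕ))

/-- Normalized Eisenstein series `E_{2k}`. -/
def Eis (k : ℕ) (τ : ℂ) : ℂ :=
  1 - (4 * k / (bernoulli (2 * k) : ℂ)) *
      ∑' n : ℕ+, (ArithmeticFunction.sigma (2 * k - 1) n : ℂ) * qq τ ^ (n : ℕ)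

/-- Normalized differential in `z`: `(1/2πi) d/dz`. -/
def dz (f : ℂ → ℂ) : ℂ → ℂ := fun z => (2 * (Real.pi : ℂ) * I)⁻¹ * deriv f z

/-- The first Jacobi theta function. -/
def θ₁ (z τ : ℂ) : ℂ :=
  -I * Complex.exp (2 * (Real.pi : ℂ) * I * τ / 8)
    * (Complex.exp ((Real.pi : ℂ) * I * z) - Complex.exp (-((Real.pi : ℂ) * I * z)))
    * ∏' m : ℕ+, (1 - qq τ ^ (m : ℕ)) * (1 - pp z * qq τ ^ (m : ℕ))
        * (1 - (pp z)⁻¹ * qq τ ^ (m : ℕ))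

/-- The Weierstrass ℘ function as given by its Laurent series. -/
def wp (z τ : ℂ) : ℂ :=
  ((2 * (Real.pi : ℂ) * I) ^ 2)⁻¹ *
    (1 / z ^ 2 + ∑' n : ℕ+, ((2 * (n : ℂ) + 1) * 2 * riemannZeta (2 * (n : ℕ) + 2)
        * Eis ((n : ℕ) + 1) τ * z ^ (2 * (n : ℕ))))


/-- Normalized differential in `τ`: `(1/2πi) d/dτ`. -/
def dτ' (f : ℂ → ℂ) : ℂ → ℂ := fun τ => (2 * (Real.pi : ℂ) * I)⁻¹ * deriv f τ


/-! ### Auxiliary lemmas -/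

lemma pp_ne_zero (w : ℂ) : pp w ≠ 0 := Complex.exp_ne_zero _

lemma abs_pp (w : ℂ) : ‖pp w‖ = Real.exp (-(2*Real.pi*w.im)) := by
  rw [pp, Complex.norm_exp]; congr 1; simp

lemma abs_qq (τ : ℂ) : ‖qq τ‖ = Real.exp (-(2*Real.pi*τ.im)) := abs_pp τ

lemma slit_one_sub {x : ℂ} (h : ‖x‖ < 1) : 1 - x ∈ Complex.slitPlane := by
  rw [Complex.mem_slitPlane_iff]
  left
  have h2 : |x.re| < 1 := lt_of_le_of_lt (Complex.abs_re_le_norm x) h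
  simp only [Complex.sub_re, Complex.one_re]
  cases abs_lt.mp h2; linarith

lemma ne_one_sub {x : ℂ} (h : ‖x‖ < 1) : 1 - x ≠ 0 :=
  Complex.slitPlane_ne_zero (slit_one_sub h)

lemma abs_one_sub_ge {x : ℂ} (h : ‖x‖ < 1) : 1 - ‖x‖ ≤ ‖1 - x‖ := by
  have h1 := norm_sub_norm_le (1:ℂ) x
  simpa using h1

lemma norm_inv_one_sub_le {x : ℂ} {c : ℝ} (hc : c < 1) (h : ‖x‖ ≤ c) :
    ‖(1 - x)⁻¹‖ ≤ (1 - c)⁻¹ := by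
  have hx1 : ‖x‖ < 1 := lt_of_le_of_lt h hc
  rw [norm_inv]
  have h1 : (0:ℝ) < 1 - c := by linarith
  have h2 : 1 - c ≤ ‖1 - x‖ := le_trans (by linarith) (abs_one_sub_ge hx1)
  exact inv_anti₀ h1 h2

/-- log bound: for `‖x‖ ≤ c < 1`, `‖log (1-x)‖ ≤ ((1-c)⁻¹/2 + 1) * ‖x‖`. -/
lemma norm_log_one_sub_le {x : ℂ} {c : ℝ} (hc : c < 1) (h : ‖x‖ ≤ c) :
    ‖Complex.log (1 - x)‖ ≤ ((1-c)⁻¹/2 + 1) * ‖x‖ := by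
  have hx1 : ‖-x‖ < 1 := by simpa using lt_of_le_of_lt h hc
  have hb := Complex.norm_log_one_add_le hx1
  rw [show (1 : ℂ) + -x = 1 - x by ring] at hb
  refine hb.trans ?_
  rw [norm_neg] at *
  have hxa : ‖x‖ ≤ c := by simpa using h
  have h0 : (0:ℝ) ≤ ‖x‖ := norm_nonneg x
  have hc0 : 0 ≤ c := le_trans h0 hxa
  have hinv : (1 - ‖x‖)⁻¹ ≤ (1-c)⁻¹ := by
    apply inv_anti₀ <;> linarith
  have hkey : ‖x‖^2 * (1-‖x‖)⁻¹ / 2 ≤ ‖x‖ * (1-c)⁻¹/2 := by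
    rw [sq]
    have h1 : ‖x‖ * ‖x‖ * (1-‖x‖)⁻¹ ≤ ‖x‖ * 1 * (1-c)⁻¹ := by
      apply mul_le_mul
      · apply mul_le_mul le_rfl (le_trans hxa hc.le) h0 h0
      · exact hinv
      · rw [inv_nonneg]; linarith [lt_of_le_of_lt hxa hc]
      · positivity
    linarith
  linarith

lemma geom_pnat_tsum {x : ℂ} (h : ‖x‖ < 1) :
    ∑' k : ℕ+, x ^ (k:ℕ) = x * (1-x)⁻¹ := by
  rw [← Equiv.pnatEquivNat.symm.tsum_eq]
  have he : ∀ n : ℕ, x ^ ((Equiv.pnatEquivNat.symm n : ℕ+) : ℕ) = x * x ^ n := by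
    intro n; rw [show ((Equiv.pnatEquivNat.symm n : ℕ+) : ℕ) = n + 1 from rfl]; ring
  rw [tsum_congr he, tsum_mul_left, tsum_geometric_of_norm_lt_one (by simpa using h)]

lemma summable_pnat_geom {x : ℂ} (h : ‖x‖ < 1) :
    Summable (fun k : ℕ+ => x ^ (k:ℕ)) :=
  (summable_geometric_of_norm_lt_one h).comp_injective PNat.coe_injective

lemma summable_pnat_geom_real {x : ℝ} (h0 : 0 ≤ x) (h : x < 1) :
    Summable (fun k : ℕ+ => x ^ (k:ℕ)) :=
  (summable_geometric_of_lt_one h0 h).comp_injective PNat.coe_injective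

lemma summable_pnat_geom_real' {x : ℝ} (h0 : 0 ≤ x) (h : x < 1) (C : ℝ) :
    Summable (fun k : ℕ+ => C * x ^ ((k:ℕ)-1)) := by
  apply Summable.mul_left
  have hs : Summable ((fun n : ℕ => x ^ n) ∘ (fun k : ℕ+ => (k:ℕ) - 1)) := by
    apply Summable.comp_injective (summable_geometric_of_lt_one h0 h)
    intro a b hab
    have h1 : 0 < (a:ℕ) := a.pos
    have h2 : 0 < (b:ℕ) := b.pos
    have hab' : (a:ℕ) - 1 = (b:ℕ) - 1 := hab
    exact PNat.coe_injective (by omega)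
  exact hs

/-- summand of the log of the theta product -/
def Lg (q : ℂ) (m : ℕ+) (w : ℂ) : ℂ :=
  Complex.log (1 - q^(m:ℕ)) + Complex.log (1 - pp w * q^(m:ℕ))
    + Complex.log (1 - (pp w)⁻¹ * q^(m:ℕ))

/-- its `w`-derivative -/
def Dg (q : ℂ) (m : ℕ+) (w : ℂ) : ℂ :=
  (1 - pp w * q^(m:ℕ))⁻¹ * -(2*(Real.pi:ℂ)*I * pp w * q^(m:ℕ))
    + (1 - (pp w)⁻¹ * q^(m:ℕ))⁻¹ * (2*(Real.pi:ℂ)*I * (pp w)⁻¹ * q^(m:ℕ))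

lemma hasDerivAt_pp (w : ℂ) : HasDerivAt pp (2*(Real.pi:ℂ)*I * pp w) w := by
  have h1 : HasDerivAt (fun w : ℂ => 2*(Real.pi:ℂ)*I*w) (2*(Real.pi:ℂ)*I) w := by
    simpa using (hasDerivAt_id w).const_mul (2*(Real.pi:ℂ)*I)
  rw [show pp = fun w : ℂ => Complex.exp (2*(Real.pi:ℂ)*I*w) from rfl]
  have h2 := h1.cexp
  refine h2.congr_deriv ?_
  ring

lemma hasDerivAt_pp_inv (w : ℂ) :
    HasDerivAt (fun w => (pp w)⁻¹) (-(2*(Real.pi:ℂ)*I) * (pp w)⁻¹) w := by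
  have h := (hasDerivAt_pp w).inv (pp_ne_zero w)
  refine h.congr_deriv ?_
  field_simp [pp_ne_zero w]

lemma hasDerivAt_Lg {q : ℂ} {m : ℕ+} {w : ℂ}
    (h2 : ‖pp w * q^(m:ℕ)‖ < 1)
    (h3 : ‖(pp w)⁻¹ * q^(m:ℕ)‖ < 1) :
    HasDerivAt (Lg q m) (Dg q m w) w := by
  have d2 : HasDerivAt (fun w => 1 - pp w * q^(m:ℕ))
      (-(2*(Real.pi:ℂ)*I * pp w * q^(m:ℕ))) w := by
    simpa using (((hasDerivAt_pp w).mul_const (q^(m:ℕ))).const_sub 1)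
  have d3 : HasDerivAt (fun w => 1 - (pp w)⁻¹ * q^(m:ℕ))
      (2*(Real.pi:ℂ)*I * (pp w)⁻¹ * q^(m:ℕ)) w := by
    have h := ((hasDerivAt_pp_inv w).mul_const (q^(m:ℕ))).const_sub 1
    refine h.congr_deriv ?_; ring
  have l2 := (Complex.hasDerivAt_log (slit_one_sub h2)).comp w d2
  have l3 := (Complex.hasDerivAt_log (slit_one_sub h3)).comp w d3
  have hfin := ((hasDerivAt_const w (Complex.log (1 - q^(m:ℕ)))).add l2).add l3
  refine hfin.congr_deriv ?_
  rw [Dg]; ring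

set_option maxHeartbeats 1000000 in
theorem tsum_Dg (c p q : ℂ) (b : ℝ) (hb1 : 1 ≤ b)
    (habsp : ‖p‖ ≤ b) (habspi : ‖p⁻¹‖ ≤ b)
    (hbq : b * ‖q‖ < 1) :
    ∑' m : ℕ+, ((1 - p*q^(m:ℕ))⁻¹ * -(c * p * q^(m:ℕ))
        + (1 - p⁻¹*q^(m:ℕ))⁻¹ * (c * p⁻¹ * q^(m:ℕ)))
      = -c * ∑' (k : ℕ+) (r : ℕ+), (p^(k:ℕ) - p⁻¹^(k:ℕ)) * q^((k:ℕ)*(r:ℕ)) := by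
  have hq0 : (0:ℝ) ≤ ‖q‖ := norm_nonneg q
  have hb0 : (0:ℝ) < b := lt_of_lt_of_le one_pos hb1
  have hq1 : ‖q‖ < 1 := by nlinarith
  have hqm_le : ∀ m : ℕ+, ‖q^(m:ℕ)‖ ≤ ‖q‖ := by
    intro m
    rw [norm_pow]
    calc ‖q‖ ^ (m:ℕ) ≤ ‖q‖ ^ 1 :=
          pow_le_pow_of_le_one hq0 hq1.le m.one_le
      _ = ‖q‖ := pow_one _
  have hx : ∀ m : ℕ+, ‖p * q^(m:ℕ)‖ < 1 := by
    intro m; rw [norm_mul]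
    calc ‖p‖ * ‖q^(m:ℕ)‖ ≤ b * ‖q‖ := by
          apply mul_le_mul habsp (hqm_le m) (norm_nonneg _) hb0.le
      _ < 1 := hbq
  have hy : ∀ m : ℕ+, ‖p⁻¹ * q^(m:ℕ)‖ < 1 := by
    intro m; rw [norm_mul]
    calc ‖p⁻¹‖ * ‖q^(m:ℕ)‖ ≤ b * ‖q‖ := by
          apply mul_le_mul habspi (hqm_le m) (norm_nonneg _) hb0.le
      _ < 1 := hbq
  have step1 : ∀ m : ℕ+,
      (1 - p*q^(m:ℕ))⁻¹ * -(c * p * q^(m:ℕ)) + (1 - p⁻¹*q^(m:ℕ))⁻¹ * (c * p⁻¹ * q^(m:ℕ))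
        = -c * ∑' k : ℕ+, (p^(k:ℕ) - p⁻¹^(k:ℕ)) * q^((k:ℕ)*(m:ℕ)) := by
    intro m
    have e1 : ∑' k : ℕ+, (p*q^(m:ℕ))^(k:ℕ) = (p*q^(m:ℕ)) * (1 - p*q^(m:ℕ))⁻¹ :=
      geom_pnat_tsum (hx m)
    have e2 : ∑' k : ℕ+, (p⁻¹*q^(m:ℕ))^(k:ℕ) = (p⁻¹*q^(m:ℕ)) * (1 - p⁻¹*q^(m:ℕ))⁻¹ :=
      geom_pnat_tsum (hy m)
    have hsum : ∀ k : ℕ+, (p^(k:ℕ) - p⁻¹^(k:ℕ)) * q^((k:ℕ)*(m:ℕ))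
        = (p*q^(m:ℕ))^(k:ℕ) - (p⁻¹*q^(m:ℕ))^(k:ℕ) := by
      intro k
      rw [mul_pow, mul_pow, mul_comm (k:ℕ) (m:ℕ), pow_mul]
      ring
    rw [tsum_congr hsum, Summable.tsum_sub (summable_pnat_geom (hx m)) (summable_pnat_geom (hy m)),
      e1, e2]
    ring
  rw [tsum_congr step1, tsum_mul_left]
  congr 1
  have hbq1 : (0:ℝ) ≤ b * ‖q‖ := by positivity
  have habs_pk : ∀ k : ℕ+, ‖p^(k:ℕ) - p⁻¹^(k:ℕ)‖ ≤ 2 * b^(k:ℕ) := by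
    intro k
    calc ‖p^(k:ℕ) - p⁻¹^(k:ℕ)‖
        ≤ ‖p^(k:ℕ)‖ + ‖p⁻¹^(k:ℕ)‖ := norm_sub_le _ _
      _ ≤ b^(k:ℕ) + b^(k:ℕ) := by
          rw [norm_pow, norm_pow]
          exact add_le_add (pow_le_pow_left₀ (norm_nonneg _) habsp _)
            (pow_le_pow_left₀ (norm_nonneg _) habspi _)
      _ = 2 * b^(k:ℕ) := by ring
  have hqkm : ∀ k m : ℕ+, ‖q^((k:ℕ)*(m:ℕ))‖
      ≤ ‖q‖ ^ ((k:ℕ)-1) * ‖q‖ ^ (m:ℕ) := by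
    intro k m
    rw [norm_pow, ← pow_add]
    apply pow_le_pow_of_le_one hq0 hq1.le
    have h1 : 1 ≤ (k:ℕ) := k.one_le
    have h2 : 1 ≤ (m:ℕ) := m.one_le
    obtain ⟨a, ha⟩ := Nat.exists_eq_add_of_le h1
    obtain ⟨c', hc'⟩ := Nat.exists_eq_add_of_le h2
    rw [ha, hc']
    have hex : (1+a)*(1+c') = (1+a+c') + a*c' := by ring
    have h3 : (1+a)-1 + (1+c') = 1+a+c' := by omega
    rw [h3, hex]
    exact Nat.le_add_right _ _
  have hF : ∀ (x : ℕ+ × ℕ+),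
      ‖(p^(x.1:ℕ) - p⁻¹^(x.1:ℕ)) * q^((x.1:ℕ)*(x.2:ℕ))‖
        ≤ (2*b*(b*‖q‖)^((x.1:ℕ)-1)) * (‖q‖ ^ (x.2:ℕ)) := by
    rintro ⟨k, m⟩
    simp only [norm_mul]
    calc ‖p^(k:ℕ) - p⁻¹^(k:ℕ)‖ * ‖q^((k:ℕ)*(m:ℕ))‖
        ≤ (2 * b^(k:ℕ)) * (‖q‖ ^ ((k:ℕ)-1) * ‖q‖ ^ (m:ℕ)) := by
          apply mul_le_mul (habs_pk k) (hqkm k m) (norm_nonneg _) (by positivity)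
      _ = (2*b*(b*‖q‖)^((k:ℕ)-1)) * (‖q‖ ^ (m:ℕ)) := by
          rw [mul_pow]
          have hk1 : 1 ≤ (k:ℕ) := k.one_le
          have hbk : b^(k:ℕ) = b * b^((k:ℕ)-1) := by
            conv_lhs => rw [show (k:ℕ) = 1 + ((k:ℕ)-1) by omega]
            rw [pow_add, pow_one]
          rw [hbk]; ring
  have hsummable : Summable (Function.uncurry
      (fun k m : ℕ+ => (p^(k:ℕ) - p⁻¹^(k:ℕ)) * q^((k:ℕ)*(m:ℕ)))) := by
    have hg : Summable (fun x : ℕ+ × ℕ+ =>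
        (2*b*(b*‖q‖)^((x.1:ℕ)-1)) * (‖q‖ ^ (x.2:ℕ))) :=
      Summable.mul_of_nonneg (summable_pnat_geom_real' hbq1 hbq (2*b))
        (summable_pnat_geom_real hq0 hq1) (fun k => by positivity) (fun m => by positivity)
    exact Summable.of_norm_bounded hg hF
  have hrow : ∀ k : ℕ+, Summable (fun m : ℕ+ => (p^(k:ℕ) - p⁻¹^(k:ℕ)) * q^((k:ℕ)*(m:ℕ))) := by
    intro k
    apply Summable.mul_left
    have hqe : ∀ m : ℕ+, q^((k:ℕ)*(m:ℕ)) = (q^(k:ℕ))^(m:ℕ) := fun m => by rw [← pow_mul]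
    rw [show (fun m : ℕ+ => q^((k:ℕ)*(m:ℕ))) = fun m : ℕ+ => (q^(k:ℕ))^(m:ℕ) from
      funext hqe]
    apply summable_pnat_geom
    rw [norm_pow]
    calc ‖q‖ ^ (k:ℕ) ≤ ‖q‖ ^ 1 :=
        pow_le_pow_of_le_one hq0 hq1.le k.one_le
      _ < 1 := by rwa [pow_one]
  have hcol : ∀ m : ℕ+, Summable (fun k : ℕ+ => (p^(k:ℕ) - p⁻¹^(k:ℕ)) * q^((k:ℕ)*(m:ℕ))) := by
    intro m
    apply Summable.of_norm_bounded (g := fun k : ℕ+ => (2*b*(b*‖q‖)^((k:ℕ)-1))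
      * (‖q‖ ^ (m:ℕ)))
    · exact (summable_pnat_geom_real' hbq1 hbq (2*b)).mul_right _
    · intro k; exact hF (k, m)
  exact Summable.tsum_comm' hsummable hrow hcol


/-- the logarithmic `z`-derivative of `θ₁` equals `J_1`. -/
theorem theta_log_deriv_eq_J_one (z τ : ℂ) (hτ : 0 < τ.im)
    (h1 : ‖qq τ‖ < ‖pp z‖)
    (h2 : ‖pp z‖ < (‖qq τ‖)⁻¹)
    (hp : pp z ≠ 1) :
    dz (fun w => θ₁ w τ) z / θ₁ z τ = Jdef 1 z τ := by
  have pi_pos := Real.pi_pos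
  have hπ : (2*(Real.pi:ℂ)*I) ≠ 0 := by
    simp [Real.pi_ne_zero, Complex.I_ne_zero, Complex.ofReal_ne_zero]
  -- strip setup
  have himz1 : z.im < τ.im := by
    rw [abs_qq, abs_pp] at h1
    have h := Real.exp_lt_exp.mp h1
    nlinarith
  have himz2 : -τ.im < z.im := by
    rw [abs_pp, abs_qq, ← Real.exp_neg] at h2
    have h := Real.exp_lt_exp.mp h2
    nlinarith
  have habsz : |z.im| < τ.im := abs_lt.mpr ⟨himz2, himz1⟩
  set T : ℝ := (|z.im| + τ.im)/2 with hTdef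
  have hTz : |z.im| < T := by rw [hTdef]; linarith
  have hTτ : T < τ.im := by rw [hTdef]; linarith
  have hT0 : 0 ≤ T := by rw [hTdef]; have := abs_nonneg z.im; linarith
  set t : Set ℂ := Complex.im ⁻¹' (Set.Ioo (-T) T) with htdef
  have ht_open : IsOpen t := isOpen_Ioo.preimage Complex.continuous_im
  have ht_conn : IsPreconnected t :=
    ((convex_Ioo (-T) T).linear_preimage Complex.imLm).isPreconnected
  have hzt : z ∈ t := by
    simp only [htdef, Set.mem_preimage, Set.mem_Ioo]
    obtain ⟨ha, hb⟩ := abs_lt.mp hTz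
    exact ⟨ha, hb⟩
  set q : ℂ := qq τ with hqdef
  set b : ℝ := Real.exp (2*Real.pi*T) with hbdef
  have hb1 : 1 ≤ b := Real.one_le_exp (by positivity)
  have hb0 : 0 < b := lt_of_lt_of_le one_pos hb1
  have habsq : ‖q‖ = Real.exp (-(2*Real.pi*τ.im)) := abs_qq τ
  have hq0 : 0 ≤ ‖q‖ := norm_nonneg q
  have hq1 : ‖q‖ < 1 := by
    rw [habsq, Real.exp_lt_one_iff]; nlinarith
  have hbq : b * ‖q‖ < 1 := by
    rw [habsq, hbdef, ← Real.exp_add, Real.exp_lt_one_iff]; nlinarith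
  have hbq0 : 0 ≤ b * ‖q‖ := by positivity
  have hppb : ∀ w ∈ t, ‖pp w‖ ≤ b ∧ ‖(pp w)⁻¹‖ ≤ b := by
    intro w hw
    simp only [htdef, Set.mem_preimage, Set.mem_Ioo] at hw
    obtain ⟨hw1, hw2⟩ := hw
    constructor
    · rw [abs_pp, hbdef]; apply Real.exp_le_exp.mpr; nlinarith
    · rw [norm_inv, abs_pp, ← Real.exp_neg, hbdef]
      apply Real.exp_le_exp.mpr; nlinarith
  have hqm_le : ∀ m : ℕ+, ‖q ^ (m:ℕ)‖ ≤ ‖q‖ := by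
    intro m; rw [norm_pow]
    calc ‖q‖ ^ (m:ℕ) ≤ ‖q‖ ^ 1 :=
        pow_le_pow_of_le_one hq0 hq1.le m.one_le
      _ = _ := pow_one _
  have hqm_pow : ∀ m : ℕ+, ‖q ^ (m:ℕ)‖ = ‖q‖ ^ (m:ℕ) :=
    fun m => norm_pow _ _
  have hqmm : ∀ m : ℕ+, ‖q‖ ^ (m:ℕ) ≤ ‖q‖ := by
    intro m; rw [← hqm_pow m]; exact hqm_le m
  -- per-factor bounds on the strip, with geometric decay in m
  have hxm : ∀ w ∈ t, ∀ m : ℕ+,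
      ‖pp w * q^(m:ℕ)‖ ≤ b * ‖q‖ ^ (m:ℕ) := by
    intro w hw m
    rw [norm_mul, hqm_pow m]
    exact mul_le_mul_of_nonneg_right (hppb w hw).1 (by positivity)
  have hym : ∀ w ∈ t, ∀ m : ℕ+,
      ‖(pp w)⁻¹ * q^(m:ℕ)‖ ≤ b * ‖q‖ ^ (m:ℕ) := by
    intro w hw m
    rw [norm_mul, hqm_pow m]
    exact mul_le_mul_of_nonneg_right (hppb w hw).2 (by positivity)
  have hqmb : ∀ m : ℕ+, ‖q^(m:ℕ)‖ ≤ b * ‖q‖ ^ (m:ℕ) := by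
    intro m
    rw [hqm_pow m]
    nlinarith [pow_nonneg hq0 (m:ℕ), hqmm m]
  have hdecay : ∀ m : ℕ+, b * ‖q‖ ^ (m:ℕ) ≤ b * ‖q‖ := by
    intro m
    exact mul_le_mul_of_nonneg_left (hqmm m) hb0.le
  -- derivatives of the log-summands
  have hderiv : ∀ (m : ℕ+), ∀ w ∈ t, HasDerivAt (Lg q m) (Dg q m w) w := by
    intro m w hw
    exact hasDerivAt_Lg (lt_of_le_of_lt (le_trans (hxm w hw m) (hdecay m)) hbq)
      (lt_of_le_of_lt (le_trans (hym w hw m) (hdecay m)) hbq)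
  have habs2pi : ‖2*(Real.pi:ℂ)*I‖ = 2*Real.pi := by
    simp [abs_of_pos Real.pi_pos]
  have hinvpos : (0:ℝ) < (1 - b * ‖q‖)⁻¹ := by
    rw [inv_pos]; linarith
  have hDgb : ∀ (m : ℕ+), ∀ w ∈ t,
      ‖Dg q m w‖ ≤ (4*Real.pi*b*(1 - b*‖q‖)⁻¹) * ‖q‖ ^ (m:ℕ) := by
    intro m w hw
    have hx1 : ‖pp w * q^(m:ℕ)‖ ≤ b * ‖q‖ :=
      le_trans (hxm w hw m) (hdecay m)
    have hy1 : ‖(pp w)⁻¹ * q^(m:ℕ)‖ ≤ b * ‖q‖ :=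
      le_trans (hym w hw m) (hdecay m)
    have hi1 : ‖(1 - pp w * q^(m:ℕ))⁻¹‖ ≤ (1 - b*‖q‖)⁻¹ :=
      norm_inv_one_sub_le hbq hx1
    have hi2 : ‖(1 - (pp w)⁻¹ * q^(m:ℕ))⁻¹‖ ≤ (1 - b*‖q‖)⁻¹ :=
      norm_inv_one_sub_le hbq hy1
    have hn1 : ‖-(2*(Real.pi:ℂ)*I * pp w * q^(m:ℕ))‖
        ≤ 2*Real.pi * (b * ‖q‖ ^ (m:ℕ)) := by
      rw [norm_neg, show (2*(Real.pi:ℂ)*I * pp w * q^(m:ℕ))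
        = (2*(Real.pi:ℂ)*I) * (pp w * q^(m:ℕ)) by ring]
      rw [norm_mul, habs2pi]
      exact mul_le_mul_of_nonneg_left (hxm w hw m) (by positivity)
    have hn2 : ‖(2*(Real.pi:ℂ)*I * (pp w)⁻¹ * q^(m:ℕ))‖
        ≤ 2*Real.pi * (b * ‖q‖ ^ (m:ℕ)) := by
      rw [show (2*(Real.pi:ℂ)*I * (pp w)⁻¹ * q^(m:ℕ))
        = (2*(Real.pi:ℂ)*I) * ((pp w)⁻¹ * q^(m:ℕ)) by ring]
      rw [norm_mul, habs2pi]
      exact mul_le_mul_of_nonneg_left (hym w hw m) (by positivity)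
    calc ‖Dg q m w‖ ≤ ‖(1 - pp w * q^(m:ℕ))⁻¹ * -(2*(Real.pi:ℂ)*I * pp w * q^(m:ℕ))‖
          + ‖(1 - (pp w)⁻¹ * q^(m:ℕ))⁻¹ * (2*(Real.pi:ℂ)*I * (pp w)⁻¹ * q^(m:ℕ))‖ := by
          rw [Dg]; exact norm_add_le _ _
      _ ≤ (1 - b*‖q‖)⁻¹ * (2*Real.pi * (b * ‖q‖ ^ (m:ℕ)))
          + (1 - b*‖q‖)⁻¹ * (2*Real.pi * (b * ‖q‖ ^ (m:ℕ))) := by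
          rw [norm_mul, norm_mul]
          exact add_le_add
            (mul_le_mul hi1 hn1 (norm_nonneg _) hinvpos.le)
            (mul_le_mul hi2 hn2 (norm_nonneg _) hinvpos.le)
      _ = (4*Real.pi*b*(1 - b*‖q‖)⁻¹) * ‖q‖ ^ (m:ℕ) := by ring
  have hu : Summable (fun m : ℕ+ =>
      (4*Real.pi*b*(1 - b*‖q‖)⁻¹) * ‖q‖ ^ (m:ℕ)) :=
    (summable_pnat_geom_real hq0 hq1).mul_left _
  -- summability of the log series on the strip
  have hLgsum : ∀ w ∈ t, Summable (fun m : ℕ+ => Lg q m w) := by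
    intro w hw
    have hK0 : (0:ℝ) ≤ (1 - b*‖q‖)⁻¹/2 + 1 := by linarith
    apply Summable.of_norm_bounded
      (g := fun m : ℕ+ => (3*((1 - b*‖q‖)⁻¹/2 + 1)*b) * ‖q‖ ^ (m:ℕ))
      ((summable_pnat_geom_real hq0 hq1).mul_left _)
    intro m
    have l1 : ‖Complex.log (1 - q^(m:ℕ))‖
        ≤ ((1 - b*‖q‖)⁻¹/2 + 1) * (b * ‖q‖ ^ (m:ℕ)) := by
      refine le_trans (norm_log_one_sub_le hbq (le_trans (hqmb m) (hdecay m))) ?_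
      exact mul_le_mul_of_nonneg_left (hqmb m) hK0
    have l2 : ‖Complex.log (1 - pp w * q^(m:ℕ))‖
        ≤ ((1 - b*‖q‖)⁻¹/2 + 1) * (b * ‖q‖ ^ (m:ℕ)) := by
      refine le_trans (norm_log_one_sub_le hbq (le_trans (hxm w hw m) (hdecay m))) ?_
      exact mul_le_mul_of_nonneg_left (hxm w hw m) hK0
    have l3 : ‖Complex.log (1 - (pp w)⁻¹ * q^(m:ℕ))‖
        ≤ ((1 - b*‖q‖)⁻¹/2 + 1) * (b * ‖q‖ ^ (m:ℕ)) := by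
      refine le_trans (norm_log_one_sub_le hbq (le_trans (hym w hw m) (hdecay m))) ?_
      exact mul_le_mul_of_nonneg_left (hym w hw m) hK0
    calc ‖Lg q m w‖ ≤ ‖Complex.log (1 - q^(m:ℕ)) + Complex.log (1 - pp w * q^(m:ℕ))‖
          + ‖Complex.log (1 - (pp w)⁻¹ * q^(m:ℕ))‖ := by
          rw [Lg]; exact norm_add_le _ _
      _ ≤ ‖Complex.log (1 - q^(m:ℕ))‖ + ‖Complex.log (1 - pp w * q^(m:ℕ))‖
          + ‖Complex.log (1 - (pp w)⁻¹ * q^(m:ℕ))‖ :=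
          add_le_add_left (norm_add_le _ _) _
      _ ≤ (3*((1 - b*‖q‖)⁻¹/2 + 1)*b) * ‖q‖ ^ (m:ℕ) := by
          have := add_le_add (add_le_add l1 l2) l3
          refine le_trans this (le_of_eq ?_)
          ring
  -- the derivative of the log series
  have hS : HasDerivAt (fun w => ∑' m : ℕ+, Lg q m w) (∑' m : ℕ+, Dg q m z) z :=
    hasDerivAt_tsum_of_isPreconnected hu ht_open ht_conn hderiv hDgb hzt (hLgsum z hzt) hzt
  -- the product identity on the strip
  have hprod : ∀ w ∈ t,
      (∏' m : ℕ+, (1 - q ^ (m:ℕ)) * (1 - pp w * q ^ (m:ℕ)) * (1 - (pp w)⁻¹ * q ^ (m:ℕ)))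
        = Complex.exp (∑' m : ℕ+, Lg q m w) := by
    intro w hw
    have hs := ((hLgsum w hw).hasSum).cexp
    have hcong : (cexp ∘ fun m : ℕ+ => Lg q m w)
        = fun m : ℕ+ => (1 - q ^ (m:ℕ)) * (1 - pp w * q ^ (m:ℕ))
            * (1 - (pp w)⁻¹ * q ^ (m:ℕ)) := by
      funext m
      have n1 : 1 - q^(m:ℕ) ≠ 0 :=
        ne_one_sub (lt_of_le_of_lt (le_trans (hqmb m) (hdecay m)) hbq)
      have n2 : 1 - pp w * q^(m:ℕ) ≠ 0 :=
        ne_one_sub (lt_of_le_of_lt (le_trans (hxm w hw m) (hdecay m)) hbq)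
      have n3 : 1 - (pp w)⁻¹ * q^(m:ℕ) ≠ 0 :=
        ne_one_sub (lt_of_le_of_lt (le_trans (hym w hw m) (hdecay m)) hbq)
      simp only [Function.comp, Lg, Complex.exp_add,
        Complex.exp_log n1, Complex.exp_log n2, Complex.exp_log n3]
    rw [hcong] at hs
    exact hs.tprod_eq
  -- θ₁ on the strip
  have hθeq : ∀ w ∈ t, θ₁ w τ
      = (-I * cexp (2*(Real.pi:ℂ)*I*τ/8))
        * ((cexp ((Real.pi:ℂ)*I*w) - cexp (-((Real.pi:ℂ)*I*w)))
          * cexp (∑' m : ℕ+, Lg q m w)) := by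
    intro w hw
    rw [θ₁, ← hqdef, ← hprod w hw]
    ring
  set e : ℂ := cexp ((Real.pi:ℂ)*I*z) with hedef
  have he0 : e ≠ 0 := Complex.exp_ne_zero _
  have hee : e * e = pp z := by
    rw [hedef, ← Complex.exp_add, pp]; congr 1; ring
  have heinv : cexp (-((Real.pi:ℂ)*I*z)) = e⁻¹ := by
    rw [hedef, ← Complex.exp_neg]
  have hsfz0 : e - e⁻¹ ≠ 0 := by
    intro h
    apply hp
    have h' : e * (e - e⁻¹) = 0 := by rw [h, mul_zero]
    rw [mul_sub, mul_inv_cancel₀ he0, hee] at h'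
    exact sub_eq_zero.mp h'
  -- derivative of the sine factor
  have hd1 : HasDerivAt (fun w : ℂ => cexp ((Real.pi:ℂ)*I*w))
      ((Real.pi:ℂ)*I * cexp ((Real.pi:ℂ)*I*z)) z := by
    have h0 : HasDerivAt (fun w : ℂ => (Real.pi:ℂ)*I*w) ((Real.pi:ℂ)*I) z := by
      simpa using (hasDerivAt_id z).const_mul ((Real.pi:ℂ)*I)
    have h' := h0.cexp
    refine h'.congr_deriv ?_
    ring
  have hd2 : HasDerivAt (fun w : ℂ => cexp (-((Real.pi:ℂ)*I*w)))
      (-((Real.pi:ℂ)*I) * cexp (-((Real.pi:ℂ)*I*z))) z := by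
    have h0 : HasDerivAt (fun w : ℂ => -((Real.pi:ℂ)*I*w)) (-((Real.pi:ℂ)*I)) z := by
      simpa using ((hasDerivAt_id z).const_mul ((Real.pi:ℂ)*I)).fun_neg
    have h' := h0.cexp
    refine h'.congr_deriv ?_
    ring
  have hsfd : HasDerivAt (fun w : ℂ => cexp ((Real.pi:ℂ)*I*w) - cexp (-((Real.pi:ℂ)*I*w)))
      ((Real.pi:ℂ)*I * e + (Real.pi:ℂ)*I * e⁻¹) z := by
    have h := hd1.sub hd2
    rw [heinv, ← hedef] at h
    refine h.congr_deriv ?_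
    ring
  have hPd : HasDerivAt (fun w => cexp (∑' m : ℕ+, Lg q m w))
      (cexp (∑' m : ℕ+, Lg q m z) * (∑' m : ℕ+, Dg q m z)) z := hS.cexp
  set P : ℂ := cexp (∑' m : ℕ+, Lg q m z) with hPdef
  set D : ℂ := ∑' m : ℕ+, Dg q m z with hDdef
  have hθd : HasDerivAt (fun w => θ₁ w τ)
      ((-I * cexp (2*(Real.pi:ℂ)*I*τ/8))
        * (((Real.pi:ℂ)*I * e + (Real.pi:ℂ)*I * e⁻¹) * P + (e - e⁻¹) * (P * D))) z := by
    have h := (hsfd.mul hPd).const_mul (-I * cexp (2*(Real.pi:ℂ)*I*τ/8))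
    rw [heinv, ← hedef] at h
    apply h.congr_of_eventuallyEq
    filter_upwards [ht_open.mem_nhds hzt] with w hw
    rw [hθeq w hw]
    rfl
  have hθz : θ₁ z τ = (-I * cexp (2*(Real.pi:ℂ)*I*τ/8)) * ((e - e⁻¹) * P) := by
    rw [hθeq z hzt, heinv, ← hedef, ← hPdef]
  have hD_eq : D = -(2*(Real.pi:ℂ)*I) * ∑' (k : ℕ+) (r : ℕ+),
      ((pp z)^(k:ℕ) - (pp z)⁻¹^(k:ℕ)) * q^((k:ℕ)*(r:ℕ)) := by
    rw [hDdef]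
    have h := tsum_Dg (2*(Real.pi:ℂ)*I) (pp z) q b hb1 (hppb z hzt).1 (hppb z hzt).2 hbq
    rw [← h]
    apply tsum_congr
    intro m
    rw [Dg]
  have hJ : Jdef 1 z τ = pp z/(pp z - 1) - 1/2 - ∑' (k : ℕ+) (r : ℕ+),
      ((pp z)^(k:ℕ) - (pp z)⁻¹^(k:ℕ)) * q^((k:ℕ)*(r:ℕ)) := by
    rw [Jdef]
    have hinner : ∀ (k r : ℕ+),
        ((r:ℂ)^((1:ℕ)-1) * ((pp z)^((k:ℕ)) + (-1:ℂ)^(1:ℕ) * (pp z)^(-(k:ℤ)))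
          * (qq τ)^((k:ℕ)*(r:ℕ)))
        = ((pp z)^(k:ℕ) - (pp z)⁻¹^(k:ℕ)) * q^((k:ℕ)*(r:ℕ)) := by
      intro k r
      rw [zpow_neg, zpow_natCast, inv_pow, ← hqdef,
        show (1:ℕ)-1 = 0 from rfl, pow_zero, pow_one, one_mul]
      ring
    rw [if_pos rfl, tsum_congr (fun k => tsum_congr (fun r => hinner k r)), bernoulli_one]
    push_cast
    ring
  have hC0 : (-I * cexp (2*(Real.pi:ℂ)*I*τ/8)) ≠ 0 := by
    apply mul_ne_zero
    · simpa using Complex.I_ne_zero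
    · exact Complex.exp_ne_zero _
  have hP0 : P ≠ 0 := by rw [hPdef]; exact Complex.exp_ne_zero _
  have hpe1 : e * e - 1 ≠ 0 := by rw [hee]; exact sub_ne_zero.mpr hp
  set X := ∑' (k : ℕ+) (r : ℕ+), ((pp z)^(k:ℕ) - (pp z)⁻¹^(k:ℕ)) * q^((k:ℕ)*(r:ℕ)) with hX
  simp only [dz]
  rw [hθd.deriv, hθz, hJ, hD_eq, ← hee]
  field_simp
  have hu : (-1 + e ^ 2)⁻¹ * (-1 + e ^ 2) = 1 :=
    inv_mul_cancel₀ (by rw [neg_add_eq_sub, sq]; exact hpe1)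
  linear_combination (-2 * X - 1) * hu


end
end

section
/- For all n ≥ 1, J_{2,n}(z,τ) = J_n(z + 1/2, τ), i.e. 2J_n(2z,2τ) - J_n(z,τ) = J_n(z + 1/2, τ). -/
open Complex

noncomputable section

lemma pp_ne (z : ℂ) : pp z ≠ 0 := Complex.exp_ne_zero _
lemma qq_ne (τ : ℂ) : qq τ ≠ 0 := Complex.exp_ne_zero _

lemma pp_two (z : ℂ) : pp (2 * z) = pp z ^ 2 := by
  rw [pp, pp, sq, ← Complex.exp_add]; congr 1; ring

lemma qq_two (τ : ℂ) : qq (2 * τ) = qq τ ^ 2 := by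
  rw [qq, qq, sq, ← Complex.exp_add]; congr 1; ring

lemma pp_half (z : ℂ) : pp (z + 1 / 2) = -pp z := by
  rw [pp, pp, show 2*(Real.pi:ℂ)*I*(z+1/2) = 2*(Real.pi:ℂ)*I*z + Real.pi*I by ring,
    Complex.exp_add, Complex.exp_pi_mul_I]
  ring

lemma abs_qq_lt_one {τ : ℂ} (hτ : 0 < τ.im) : ‖qq τ‖ < 1 := by
  rw [qq, Complex.norm_exp, Real.exp_lt_one_iff]
  have : (2*(Real.pi:ℂ)*I*τ).re = -(2*Real.pi*τ.im) := by
    simp [Complex.mul_re, Complex.mul_im]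
  rw [this]
  have := Real.pi_pos
  nlinarith

/-- Joint summability of the double series terms. -/
lemma summable_F (n : ℕ) (p q : ℂ) (hq0 : q ≠ 0) (hq1 : ‖q‖ < 1)
    (h1 : ‖q‖ < ‖p‖) (h2 : ‖p‖ < ‖q‖⁻¹) :
    Summable (fun kr : ℕ+ × ℕ+ => ((kr.2 : ℂ)) ^ (n - 1)
      * (p ^ (kr.1 : ℕ) + (-1 : ℂ) ^ n * p ^ (-(kr.1 : ℤ)))
      * q ^ ((kr.1 : ℕ) * (kr.2 : ℕ))) := by
  set u := ‖q‖ with hu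
  set c := ‖p‖ with hc
  have hu0 : 0 < u := norm_pos_iff.2 hq0
  have hc0 : 0 < c := lt_of_le_of_lt (norm_nonneg q) h1
  have hs1 : 0 ≤ c * u := by positivity
  have hs1' : c * u < 1 := by
    have := mul_lt_mul_of_pos_right h2 hu0
    rwa [inv_mul_cancel₀ hu0.ne'] at this
  have hs2 : 0 ≤ u / c := by positivity
  have hs2' : u / c < 1 := (div_lt_one hc0).2 h1
  -- geometric factor in k
  have hgeo : Summable fun k : ℕ+ => (c * u) ^ (k : ℕ) + (u / c) ^ (k : ℕ) := by
    have : Summable fun k : ℕ => (c * u) ^ k + (u / c) ^ k :=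
      (summable_geometric_of_lt_one hs1 hs1').add (summable_geometric_of_lt_one hs2 hs2')
    exact this.comp_injective (fun a b h => PNat.coe_injective h)
  -- polynomial-times-geometric factor in r
  have hpoly : Summable fun r : ℕ+ => ((r : ℝ)) ^ (n - 1) * u ^ (r : ℕ) * u⁻¹ := by
    have : Summable fun m : ℕ => ((m : ℝ)) ^ (n - 1) * u ^ m * u⁻¹ := by
      apply Summable.mul_right
      have : ‖u‖ < 1 := by rwa [Real.norm_of_nonneg hu0.le]
      exact summable_pow_mul_geometric_of_norm_lt_one (n - 1) this
    exact this.comp_injective (fun a b h => PNat.coe_injective h)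
  have hG : Summable fun kr : ℕ+ × ℕ+ =>
      ((c * u) ^ (kr.1 : ℕ) + (u / c) ^ (kr.1 : ℕ))
        * (((kr.2 : ℝ)) ^ (n - 1) * u ^ (kr.2 : ℕ) * u⁻¹) := by
    apply hgeo.mul_of_nonneg hpoly
    · intro k; positivity
    · intro r; positivity
  apply Summable.of_norm_bounded hG
  rintro ⟨k, r⟩
  have hk1 : 1 ≤ (k : ℕ) := k.one_le
  have hr1 : 1 ≤ (r : ℕ) := r.one_le
  have hur : u ^ (r : ℕ) * u⁻¹ = u ^ ((r : ℕ) - 1) := by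
    rw [pow_sub₀ u hu0.ne' hr1, pow_one]
  have e1 : (k : ℕ) * (r : ℕ) = (k : ℕ) + (k : ℕ) * ((r : ℕ) - 1) := by
    obtain ⟨m, hm⟩ := Nat.exists_eq_add_of_le hr1
    rw [hm, Nat.add_sub_cancel_left, Nat.mul_add, Nat.mul_one]
  have hle : u ^ ((k : ℕ) * ((r : ℕ) - 1)) ≤ u ^ ((r : ℕ) - 1) :=
    pow_le_pow_of_le_one hu0.le hq1.le (Nat.le_mul_of_pos_left _ k.pos)
  have key1 : c ^ (k : ℕ) * u ^ ((k : ℕ) * (r : ℕ))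
      ≤ (c * u) ^ (k : ℕ) * (u ^ (r : ℕ) * u⁻¹) := by
    rw [e1, pow_add, hur]
    calc c ^ (k:ℕ) * (u ^ (k:ℕ) * u ^ ((k:ℕ) * ((r:ℕ)-1)))
        = (c*u)^(k:ℕ) * u ^ ((k:ℕ) * ((r:ℕ)-1)) := by rw [mul_pow]; ring
      _ ≤ (c*u)^(k:ℕ) * u ^ ((r:ℕ)-1) := mul_le_mul_of_nonneg_left hle (by positivity)
  have key2 : (c⁻¹) ^ (k : ℕ) * u ^ ((k : ℕ) * (r : ℕ))
      ≤ (u / c) ^ (k : ℕ) * (u ^ (r : ℕ) * u⁻¹) := by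
    rw [e1, pow_add, hur]
    calc (c⁻¹) ^ (k:ℕ) * (u ^ (k:ℕ) * u ^ ((k:ℕ) * ((r:ℕ)-1)))
        = (u/c)^(k:ℕ) * u ^ ((k:ℕ) * ((r:ℕ)-1)) := by
          rw [div_pow]; field_simp
          rw [← mul_pow, one_div, inv_mul_cancel₀ hc0.ne', one_pow]
      _ ≤ (u/c)^(k:ℕ) * u ^ ((r:ℕ)-1) := mul_le_mul_of_nonneg_left hle (by positivity)
  calc ‖((r : ℂ)) ^ (n - 1) * (p ^ (k : ℕ) + (-1 : ℂ) ^ n * p ^ (-(k : ℤ)))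
          * q ^ ((k : ℕ) * (r : ℕ))‖
      = (r : ℝ) ^ (n - 1) * ‖p ^ (k : ℕ) + (-1 : ℂ) ^ n * p ^ (-(k : ℤ))‖
          * u ^ ((k : ℕ) * (r : ℕ)) := by
        rw [norm_mul, norm_mul, norm_pow, norm_pow]
        norm_num
        exact Or.inl rfl
    _ ≤ (r : ℝ) ^ (n - 1) * (c ^ (k : ℕ) + (c⁻¹) ^ (k : ℕ))
          * u ^ ((k : ℕ) * (r : ℕ)) := by
        apply mul_le_mul_of_nonneg_right _ (by positivity)
        apply mul_le_mul_of_nonneg_left _ (by positivity)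
        calc ‖p ^ (k : ℕ) + (-1 : ℂ) ^ n * p ^ (-(k : ℤ))‖
            ≤ ‖p ^ (k : ℕ)‖ + ‖(-1 : ℂ) ^ n * p ^ (-(k : ℤ))‖ := norm_add_le _ _
          _ = c ^ (k : ℕ) + (c⁻¹) ^ (k : ℕ) := by
              rw [norm_mul, norm_pow, norm_pow, norm_zpow]
              simp [← hc, zpow_neg, inv_pow]
    _ ≤ ((c * u) ^ (k : ℕ) + (u / c) ^ (k : ℕ))
          * (((r : ℝ)) ^ (n - 1) * u ^ (r : ℕ) * u⁻¹) := by
        have := add_le_add key1 key2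
        calc (r : ℝ) ^ (n - 1) * (c ^ (k:ℕ) + (c⁻¹) ^ (k:ℕ)) * u ^ ((k:ℕ) * (r:ℕ))
            = (r : ℝ) ^ (n - 1) * (c ^ (k:ℕ) * u ^ ((k:ℕ)*(r:ℕ))
                + (c⁻¹) ^ (k:ℕ) * u ^ ((k:ℕ)*(r:ℕ))) := by ring
          _ ≤ (r : ℝ) ^ (n - 1) * ((c*u) ^ (k:ℕ) * (u ^ (r:ℕ) * u⁻¹)
                + (u/c) ^ (k:ℕ) * (u ^ (r:ℕ) * u⁻¹)) :=
              mul_le_mul_of_nonneg_left this (by positivity)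
          _ = ((c * u) ^ (k:ℕ) + (u / c) ^ (k:ℕ))
                * (((r : ℝ)) ^ (n - 1) * u ^ (r:ℕ) * u⁻¹) := by ring

lemma key_sum (n : ℕ) (p q : ℂ) (hq0 : q ≠ 0) (hq1 : ‖q‖ < 1)
    (h1 : ‖q‖ < ‖p‖) (h2 : ‖p‖ < ‖q‖⁻¹)
    (hsummable : Summable (fun kr : ℕ+ × ℕ+ => ((kr.2 : ℂ)) ^ (n - 1)
      * (p ^ (kr.1 : ℕ) + (-1 : ℂ) ^ n * p ^ (-(kr.1 : ℤ)))
      * q ^ ((kr.1 : ℕ) * (kr.2 : ℕ)))) :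
    (∑' (k : ℕ+) (r : ℕ+), (r : ℂ) ^ (n-1) * (p ^ (k:ℕ) + (-1:ℂ)^n * p ^ (-(k:ℤ))) * q ^ ((k:ℕ)*(r:ℕ)))
    + (∑' (k : ℕ+) (r : ℕ+), (r : ℂ) ^ (n-1) * ((-p) ^ (k:ℕ) + (-1:ℂ)^n * (-p) ^ (-(k:ℤ))) * q ^ ((k:ℕ)*(r:ℕ)))
    = 2 * ∑' (k : ℕ+) (r : ℕ+), (r : ℂ) ^ (n-1) * ((p^2) ^ (k:ℕ) + (-1:ℂ)^n * (p^2) ^ (-(k:ℤ))) * (q^2) ^ ((k:ℕ)*(r:ℕ)) := by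
  set F : ℕ+ × ℕ+ → ℂ := fun kr => ((kr.2:ℂ))^(n-1)
      * (p^(kr.1:ℕ) + (-1:ℂ)^n * p^(-(kr.1:ℤ))) * q^((kr.1:ℕ)*(kr.2:ℕ)) with hF
  have hf : Summable F := hsummable
  have hfib : ∀ k : ℕ+, Summable fun r : ℕ+ => F (k, r) := fun k =>
    hf.comp_injective (fun a b h => by simpa using h)
  set g : ℕ+ → ℂ := fun k => ∑' r : ℕ+, F (k, r) with hgdef
  have hg : Summable g := ⟨_, hf.hasSum.prod_fiberwise fun k => (hfib k).hasSum⟩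
  have e3 : (∑' (k : ℕ+) (r : ℕ+), (r:ℂ)^(n-1)*((-p)^(k:ℕ) + (-1:ℂ)^n * (-p)^(-(k:ℤ)))*q^((k:ℕ)*(r:ℕ)))
      = ∑' k : ℕ+, (-1:ℂ)^(k:ℕ) * g k := by
    refine tsum_congr fun k => ?_
    rw [hgdef, ← tsum_mul_left]
    refine tsum_congr fun r => ?_
    show _ = (-1:ℂ)^(k:ℕ) * ((r:ℂ)^(n-1) * (p^(k:ℕ) + (-1:ℂ)^n * p^(-(k:ℤ))) * q^((k:ℕ)*(r:ℕ)))
    have hk : ((k : ℤ)) = ((k : ℕ) : ℤ) := rfl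
    rw [hk, zpow_neg, zpow_neg, zpow_natCast, zpow_natCast, neg_pow, mul_inv, neg_pow]
    have hinv : ((-1 : ℂ) ^ (k:ℕ))⁻¹ = (-1 : ℂ) ^ (k:ℕ) := by
      rw [← inv_pow, inv_neg, inv_one]
    simp only [one_pow, mul_one]
    rw [hinv]
    ring
  have e2 : (∑' (k : ℕ+) (r : ℕ+), (r : ℂ)^(n-1) * ((p^2)^(k:ℕ) + (-1:ℂ)^n * (p^2)^(-(k:ℤ))) * (q^2)^((k:ℕ)*(r:ℕ)))
      = ∑' k : ℕ+, g (2 * k) := by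
    refine tsum_congr fun k => ?_
    refine tsum_congr fun r => ?_
    show _ = (r : ℂ)^(n-1) * (p^((2*k : ℕ+):ℕ) + (-1:ℂ)^n * p^(-((2*k : ℕ+):ℤ))) * q^(((2*k:ℕ+):ℕ)*(r:ℕ))
    have hk : ((k : ℤ)) = ((k : ℕ) : ℤ) := rfl
    have hk2 : (((2 * k : ℕ+)) : ℤ) = (((2 * k : ℕ+) : ℕ) : ℤ) := rfl
    rw [hk, hk2, zpow_neg, zpow_neg, zpow_natCast, zpow_natCast]
    simp only [PNat.mul_coe, PNat.val_ofNat]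
    rw [← pow_mul, ← pow_mul, show 2*((k:ℕ)*(r:ℕ)) = 2*(k:ℕ)*(r:ℕ) from (mul_assoc 2 (k:ℕ) (r:ℕ)).symm]
  have hg3 : Summable fun k : ℕ+ => (-1:ℂ)^(k:ℕ) * g k :=
    Summable.of_norm_bounded hg.norm (fun k => by simp)
  have hinj : Function.Injective (fun k : ℕ+ => 2 * k) := fun a b hab =>
    mul_left_cancel hab
  have hsupp : Function.support (fun k : ℕ+ => g k + (-1:ℂ)^(k:ℕ) * g k)
      ⊆ Set.range (fun k : ℕ+ => 2 * k) := by
    intro x hx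
    rcases Nat.even_or_odd (x : ℕ) with he | ho
    · obtain ⟨m, hm⟩ := he
      have hm0 : 0 < m := by have := x.pos; omega
      refine ⟨⟨m, hm0⟩, ?_⟩
      apply PNat.coe_injective
      show ((2 : ℕ+) : ℕ) * m = (x : ℕ)
      simp only [PNat.val_ofNat]
      omega
    · exfalso
      apply hx
      have hneg : ((-1:ℂ))^(x:ℕ) = -1 := Odd.neg_one_pow ho
      show g x + (-1:ℂ)^(x:ℕ) * g x = 0
      rw [hneg]; ring
  show (∑' k, g k) + _ = _
  rw [e3, e2, ← Summable.tsum_add hg hg3]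
  calc ∑' k : ℕ+, (g k + (-1:ℂ)^(k:ℕ) * g k)
      = ∑' k : ℕ+, (g (2*k) + (-1:ℂ)^((2*k : ℕ+):ℕ) * g (2*k)) := (hinj.tsum_eq hsupp).symm
    _ = ∑' k : ℕ+, 2 * g (2*k) := tsum_congr fun k => by
        have he : ((-1:ℂ))^((2*k : ℕ+):ℕ) = 1 :=
          Even.neg_one_pow ⟨(k:ℕ), by simp [PNat.mul_coe, two_mul]⟩
        rw [he]; ring
    _ = 2 * ∑' k : ℕ+, g (2*k) := tsum_mul_left

/-- `2 J_n(2z,2τ) - J_n(z,τ) = J_n(z + 1/2, τ)` for `n ≥ 1`. -/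
theorem J_two_n_eq_shift (n : ℕ) (hn : 1 ≤ n) (z τ : ℂ) (hτ : 0 < τ.im)
    (h1 : ‖qq τ‖ < ‖pp z‖)
    (h2 : ‖pp z‖ < ‖qq τ‖⁻¹)
    (hp : n = 1 → pp z ≠ 1 ∧ pp z ≠ -1) :
    2 * Jdef n (2 * z) (2 * τ) - Jdef n z τ = Jdef n (z + 1 / 2) τ := by
  have hq0 : qq τ ≠ 0 := qq_ne τ
  have hq1 : ‖qq τ‖ < 1 := abs_qq_lt_one hτ
  have hsum := summable_F n (pp z) (qq τ) hq0 hq1 h1 h2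
  have key := key_sum n (pp z) (qq τ) hq0 hq1 h1 h2 hsum
  simp only [Jdef, pp_two z, qq_two τ, pp_half z]
  by_cases hn1 : n = 1
  · subst hn1
    obtain ⟨hp1, hpm1⟩ := hp rfl
    simp only [eq_self_iff_true, if_true, Nat.cast_one, one_mul]
    have d1 : pp z - 1 ≠ 0 := sub_ne_zero.2 hp1
    have d2 : pp z + 1 ≠ 0 := by
      intro h; apply hpm1; linear_combination h
    have d3 : pp z ^ 2 - 1 ≠ 0 := by
      intro h; apply d1; have h2 : (pp z - 1) * (pp z + 1) = 0 := by linear_combination h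
      rcases mul_eq_zero.1 h2 with h' | h'
      · exact h'
      · exact absurd h' d2
    have d4 : -pp z - 1 ≠ 0 := by
      intro h; apply d2; linear_combination -h
    have hδ : 2 * (pp z ^ 2 / (pp z ^ 2 - 1)) - pp z / (pp z - 1)
        = -pp z / (-pp z - 1) := by
      field_simp
      ring
    linear_combination hδ + key
  · simp only [if_neg hn1]
    linear_combination (n : ℂ) * key

end
end
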